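/- Let m ≥ 0 and x ∈ T outside Ĩ (radius 2r about x_I), t ∈ I (radius r about x_I, r < π/4). Let P_m(t) be the Taylor polynomial of order m at t = x_I of the function t ↦ 1/tan((x−t)/2). Then |1/tan((x−t)/2) − P_m(t)| ≤ C |t − x_I|^{m+1} / |x − x_I|^{m+2} ≤ C |I|^{m+1}/|x−x_I|^{m+2}. -/

import Mathlib

open Real

open Set

noncomputable def cotPoly : ℕ → Polynomial ℝ
  | 0 => Polynomial.X
  | (k+1) => (cotPoly k).derivative * (1 + Polynomial.X ^ 2)

lemma cotPoly_natDegree_le (k : ℕ) : (cotPoly k).natDegree ≤ k + 1 := by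
  induction k with
  | zero => simpa [cotPoly] using Polynomial.natDegree_X_le
  | succ k ih =>
    have h1 : (cotPoly k).derivative.natDegree ≤ k := by
      have := Polynomial.natDegree_derivative_le (cotPoly k)
      omega
    have h2 : (1 + Polynomial.X ^ 2 : Polynomial ℝ).natDegree ≤ 2 := by
      refine le_trans (Polynomial.natDegree_add_le _ _) ?_
      simp
    calc (cotPoly (k+1)).natDegree ≤ (cotPoly k).derivative.natDegree
          + (1 + Polynomial.X ^ 2 : Polynomial ℝ).natDegree := by
            rw [cotPoly]; exact Polynomial.natDegree_mul_le
      _ ≤ k + 2 := by omega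

lemma poly_eval_le (p : Polynomial ℝ) (d : ℕ) (hd : p.natDegree ≤ d) :
    ∃ A > 0, ∀ B z : ℝ, 1 ≤ B → |z| ≤ B → |p.eval z| ≤ A * B ^ d := by
  refine ⟨(∑ i ∈ Finset.range (d+1), |p.coeff i|) + 1, by positivity, fun B z hB hz => ?_⟩
  have hev : p.eval z = ∑ i ∈ Finset.range (d+1), p.coeff i * z ^ i :=
    Polynomial.eval_eq_sum_range' (lt_of_le_of_lt hd (Nat.lt_succ_self d)) z
  rw [hev]
  have hB0 : (0:ℝ) ≤ B := le_trans zero_le_one hB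
  calc |∑ i ∈ Finset.range (d+1), p.coeff i * z ^ i|
      ≤ ∑ i ∈ Finset.range (d+1), |p.coeff i * z ^ i| := Finset.abs_sum_le_sum_abs _ _
    _ ≤ ∑ i ∈ Finset.range (d+1), |p.coeff i| * B ^ d := by
        refine Finset.sum_le_sum fun i hi => ?_
        rw [abs_mul, abs_pow]
        refine mul_le_mul_of_nonneg_left ?_ (abs_nonneg _)
        calc |z| ^ i ≤ B ^ i := pow_le_pow_left₀ (abs_nonneg _) hz i
          _ ≤ B ^ d := pow_le_pow_right₀ hB (by simpa using Nat.lt_succ_iff.mp (Finset.mem_range.mp hi))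
    _ = (∑ i ∈ Finset.range (d+1), |p.coeff i|) * B ^ d := by rw [Finset.sum_mul]
    _ ≤ ((∑ i ∈ Finset.range (d+1), |p.coeff i|) + 1) * B ^ d := by
        have : (0:ℝ) ≤ B ^ d := by positivity
        nlinarith

lemma sin_lower {y : ℝ} (h1 : 0 ≤ y) (h2 : y ≤ 5*π/8) :
    Real.sin (5*π/8) / (5*π/8) * y ≤ Real.sin y := by
  have hb : (0:ℝ) < 5*π/8 := by positivity
  have hbπ : 5*π/8 ≤ π := by nlinarith [pi_pos]
  have hm1 : (0:ℝ) ∈ Set.Icc (0:ℝ) π := Set.mem_Icc.mpr ⟨le_refl _, pi_pos.le⟩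
  have hm2 : (5*π/8) ∈ Set.Icc (0:ℝ) π := Set.mem_Icc.mpr ⟨hb.le, hbπ⟩
  have ha1 : (0:ℝ) ≤ 1 - y/(5*π/8) := by
    rw [sub_nonneg]; exact div_le_one_of_le₀ h2 hb.le
  have ha2 : (0:ℝ) ≤ y/(5*π/8) := by positivity
  have hab : (1 - y/(5*π/8)) + y/(5*π/8) = 1 := by ring
  have hcc := strictConcaveOn_sin_Icc.concaveOn.2 hm1 hm2 ha1 ha2 hab
  simp only [smul_eq_mul, mul_zero, Real.sin_zero, zero_add] at hcc
  rw [div_mul_cancel₀ _ hb.ne'] at hcc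
  calc Real.sin (5*π/8) / (5*π/8) * y = y/(5*π/8) * Real.sin (5*π/8) := by ring
    _ ≤ Real.sin y := by simpa using hcc

lemma abs_sin_lower {y : ℝ} (hy : |y| ≤ 5*π/8) :
    Real.sin (5*π/8) / (5*π/8) * |y| ≤ |Real.sin y| := by
  rcases le_total 0 y with h | h
  · rw [abs_of_nonneg h]
    exact le_trans (sin_lower h (by rwa [abs_of_nonneg h] at hy)) (le_abs_self _)
  · have h' : 0 ≤ -y := by linarith
    have := sin_lower h' (by rwa [abs_of_nonpos h] at hy)
    rw [Real.sin_neg] at this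
    rw [abs_of_nonpos h]
    calc Real.sin (5*π/8) / (5*π/8) * -y ≤ -Real.sin y := this
      _ ≤ |Real.sin y| := neg_le_abs _

lemma abs_cot_le {y : ℝ} (h0 : y ≠ 0) (hy : |y| ≤ 5*π/8) :
    |Real.cot y| ≤ (5*π/8) / Real.sin (5*π/8) / |y| := by
  have hb : (0:ℝ) < 5*π/8 := by positivity
  have hsb : 0 < Real.sin (5*π/8) := by
    apply Real.sin_pos_of_pos_of_lt_pi hb; nlinarith [pi_pos]
  have habs : 0 < |y| := abs_pos.mpr h0
  have hs : Real.sin (5*π/8) / (5*π/8) * |y| ≤ |Real.sin y| := abs_sin_lower hy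
  have hsy : 0 < |Real.sin y| := lt_of_lt_of_le (by positivity) hs
  rw [Real.cot_eq_cos_div_sin, abs_div]
  rw [div_le_div_iff₀ hsy habs]
  have hcos : |Real.cos y| ≤ 1 := abs_cos_le_one y
  calc |Real.cos y| * |y| ≤ 1 * |y| := by nlinarith
    _ = |y| := one_mul _
    _ ≤ (5*π/8) / Real.sin (5*π/8) * |Real.sin y| := by
        rw [div_mul_eq_mul_div, le_div_iff₀ hsb]
        calc |y| * Real.sin (5*π/8) = (5*π/8) * (Real.sin (5*π/8)/(5*π/8) * |y|) := by
              field_simp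
          _ ≤ (5*π/8) * |Real.sin y| := by nlinarith

-- helper: 1 ≤ K/|y| form, combined max bound
lemma cot_kernel_bounds {y : ℝ} (h0 : y ≠ 0) (hy : |y| ≤ 5*π/8) :
    1 ≤ (5*π/8) / Real.sin (5*π/8) / |y| := by
  have hb : (0:ℝ) < 5*π/8 := by positivity
  have hsb : 0 < Real.sin (5*π/8) := by
    apply Real.sin_pos_of_pos_of_lt_pi hb; nlinarith [pi_pos]
  have hsb1 : Real.sin (5*π/8) ≤ 1 := Real.sin_le_one _
  have habs : 0 < |y| := abs_pos.mpr h0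
  rw [le_div_iff₀ habs, one_mul]
  calc |y| ≤ 5*π/8 := hy
    _ ≤ (5*π/8) / Real.sin (5*π/8) := by
        rw [le_div_iff₀ hsb]; nlinarith


lemma my_hasDerivAt_cot {y : ℝ} (hy : Real.sin y ≠ 0) :
    HasDerivAt Real.cot (-(1 + Real.cot y ^ 2)) y := by
  have h := (Real.hasDerivAt_cos y).div (Real.hasDerivAt_sin y) hy
  have hfun : Real.cot = Real.cos / Real.sin :=
    funext fun z => Real.cot_eq_cos_div_sin z
  rw [hfun]
  refine h.congr_deriv ?_
  show _ = -(1 + (Real.cos y / Real.sin y) ^ 2)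
  field_simp
  nlinarith [Real.sin_sq_add_cos_sq y]

lemma iteratedDeriv_cotker (x : ℝ) (k : ℕ) :
    ∀ u : ℝ, Real.sin ((x - u)/2) ≠ 0 →
    iteratedDeriv k (fun u => Real.cos ((x-u)/2) / Real.sin ((x-u)/2)) u
      = (1/2 : ℝ)^k * (cotPoly k).eval (Real.cot ((x-u)/2)) := by
  have hopen : IsOpen {u : ℝ | Real.sin ((x - u)/2) ≠ 0} := by
    have hc : Continuous fun u : ℝ => Real.sin ((x - u)/2) :=
      Real.continuous_sin.comp ((continuous_const.sub continuous_id).div_const 2)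
    exact isOpen_compl_singleton.preimage hc
  induction k with
  | zero =>
    intro u hu
    simp [cotPoly, Real.cot_eq_cos_div_sin]
  | succ k ih =>
    intro u hu
    rw [iteratedDeriv_succ]
    have hev : iteratedDeriv k (fun u => Real.cos ((x-u)/2) / Real.sin ((x-u)/2))
        =ᶠ[nhds u] fun v => (1/2 : ℝ)^k * (cotPoly k).eval (Real.cot ((x-v)/2)) := by
      filter_upwards [hopen.mem_nhds hu] with v hv using ih v hv
    rw [hev.deriv_eq]
    have hw : HasDerivAt (fun u : ℝ => (x - u)/2) (-(1/2)) u := by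
      have : HasDerivAt (fun u : ℝ => x - u) (-1) u := (hasDerivAt_id u).const_sub x
      have h2 := this.div_const 2
      norm_num at h2 ⊢
      exact h2

    have hcot : HasDerivAt Real.cot (-(1 + Real.cot ((x-u)/2) ^ 2)) ((x-u)/2) :=
      my_hasDerivAt_cot hu
    have hcomp : HasDerivAt (fun u => Real.cot ((x-u)/2))
        ((-(1 + Real.cot ((x-u)/2) ^ 2)) * (-(1/2))) u := HasDerivAt.comp (h := fun u : ℝ => (x-u)/2) u hcot hw
    have hp : HasDerivAt (fun v => (cotPoly k).eval (Real.cot ((x-v)/2)))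
        ((cotPoly k).derivative.eval (Real.cot ((x-u)/2)) *
          ((-(1 + Real.cot ((x-u)/2) ^ 2)) * (-(1/2)))) u :=
      (Polynomial.hasDerivAt (cotPoly k) _).comp u hcomp
    rw [(hp.const_mul ((1/2:ℝ)^k)).deriv]
    show _ = (1/2:ℝ)^(k+1) * ((cotPoly k).derivative * (1 + Polynomial.X ^ 2)).eval _
    simp only [Polynomial.eval_mul, Polynomial.eval_add, Polynomial.eval_one,
      Polynomial.eval_pow, Polynomial.eval_X]
    ring

lemma iDW_eq_iD {f : ℝ → ℝ} {s : Set ℝ} (hs : IsOpen s) {n : ℕ} (hf : ContDiffOn ℝ n f s)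
    {a b : ℝ} (hab : a < b) (hsub : Icc a b ⊆ s) {k : ℕ} (hk : k ≤ n) {y : ℝ}
    (hy : y ∈ Icc a b) :
    iteratedDerivWithin k f (Icc a b) y = iteratedDeriv k f y := by
  have hu : UniqueDiffOn ℝ s := hs.uniqueDiffOn
  have H : HasFTaylorSeriesUpToOn n f (ftaylorSeriesWithin ℝ f s) s := hf.ftaylorSeriesWithin hu
  have hkn : (k : WithTop ℕ∞) ≤ (n : WithTop ℕ∞) := by exact_mod_cast hk
  have h1 : iteratedFDerivWithin ℝ k f (Icc a b) y = ftaylorSeriesWithin ℝ f s y k :=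
    ((H.mono hsub).eq_iteratedFDerivWithin_of_uniqueDiffOn hkn (uniqueDiffOn_Icc hab) hy).symm
  have h2 : ftaylorSeriesWithin ℝ f s y k = iteratedFDerivWithin ℝ k f s y :=
    H.eq_iteratedFDerivWithin_of_uniqueDiffOn hkn hu (hsub hy)
  have h3 : iteratedFDerivWithin ℝ k f s y = iteratedFDeriv ℝ k f y :=
    iteratedFDerivWithin_of_isOpen k hs (hsub hy)
  rw [iteratedDerivWithin_eq_iteratedFDerivWithin, iteratedDeriv_eq_iteratedFDeriv, h1, h2, h3]

lemma taylor_two_sided {f : ℝ → ℝ} {s : Set ℝ} (hs : IsOpen s) {n : ℕ}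
    (hf : ContDiffOn ℝ (n+1 : ℕ) f s) {c t M : ℝ} (hst : Set.uIcc c t ⊆ s)
    (hbound : ∀ y ∈ Set.uIcc c t, |iteratedDeriv (n+1) f y| ≤ M) :
    |f t - taylorWithinEval f n Set.univ c t| ≤ M * |t - c| ^ (n+1) / n.factorial := by
  have htayuniv : taylorWithinEval f n Set.univ c t
      = ∑ k ∈ Finset.range (n+1), ((k.factorial : ℝ)⁻¹ * (t - c) ^ k) • iteratedDeriv k f c := by
    rw [taylor_within_apply]
    exact Finset.sum_congr rfl fun k _ => by rw [iteratedDerivWithin_univ]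
  rcases lt_trichotomy c t with hct | hct | hct
  · -- c < t
    have hsub : Icc c t ⊆ s := by rwa [Set.uIcc_of_le hct.le] at hst
    have h := taylor_mean_remainder_bound (le_of_lt hct) (hf.mono hsub)
      (right_mem_Icc.mpr hct.le) (C := M) ?_
    · have htay : taylorWithinEval f n (Icc c t) c t = taylorWithinEval f n Set.univ c t := by
        rw [taylor_within_apply, htayuniv]
        refine Finset.sum_congr rfl fun k hk => ?_
        rw [iDW_eq_iD hs hf hct hsub
          (le_trans (Nat.lt_succ_iff.mp (Finset.mem_range.mp hk)) (Nat.le_succ n))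
          (left_mem_Icc.mpr hct.le)]
      rw [Real.norm_eq_abs, htay] at h
      refine le_trans h ?_
      rw [abs_of_pos (by linarith : (0:ℝ) < t - c)]
    · intro y hy
      rw [Real.norm_eq_abs, iDW_eq_iD hs hf hct hsub le_rfl hy]
      exact hbound y (by rwa [Set.uIcc_of_le hct.le])
  · -- c = t
    subst hct
    simp [zero_pow]
  · -- t < c
    set g : ℝ → ℝ := fun u => f (2*c - u) with hg
    have hgk : ∀ (k : ℕ) (u : ℝ),
        iteratedDeriv k g u = (-1:ℝ)^k • iteratedDeriv k f (2*c - u) := by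
      intro k u
      have e1 : g = fun u => (fun z => f (2*c + z)) (-u) := by
        funext v; simp [hg, sub_eq_add_neg]
      rw [e1, iteratedDeriv_comp_neg k (fun z => f (2*c + z)) u,
        iteratedDeriv_comp_const_add k f (2*c)]
      norm_num [sub_eq_add_neg]
    have hs' : IsOpen ((fun u : ℝ => 2*c - u) ⁻¹' s) := hs.preimage (by continuity)
    have hgcd : ContDiffOn ℝ (n+1 : ℕ) g ((fun u : ℝ => 2*c - u) ⁻¹' s) :=
      hf.comp ((contDiff_const.sub contDiff_id).contDiffOn) fun u hu => hu
    have hct' : c < 2*c - t := by linarith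
    have hIccsub : Icc c (2*c - t) ⊆ (fun u : ℝ => 2*c - u) ⁻¹' s := by
      intro u hu
      simp only [Set.mem_preimage]
      apply hst
      rw [Set.uIcc_of_ge hct.le]
      simp only [Set.mem_Icc] at hu ⊢
      constructor <;> linarith [hu.1, hu.2]
    have h := taylor_mean_remainder_bound (le_of_lt hct') (hgcd.mono hIccsub)
      (right_mem_Icc.mpr hct'.le) (C := M) ?_
    · have hgt : g (2*c - t) = f t := by
        show f (2*c - (2*c - t)) = f t
        norm_num
      have htay : taylorWithinEval g n (Icc c (2*c - t)) c (2*c - t)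
          = taylorWithinEval f n Set.univ c t := by
        rw [taylor_within_apply, htayuniv]
        refine Finset.sum_congr rfl fun k hk => ?_
        rw [iDW_eq_iD hs' hgcd hct' hIccsub
          (le_trans (Nat.lt_succ_iff.mp (Finset.mem_range.mp hk)) (Nat.le_succ n))
          (left_mem_Icc.mpr hct'.le), hgk]
        have e2 : (2:ℝ)*c - c = c := by ring
        rw [e2, smul_smul]
        congr 1
        have h3 : (2*c - t - c : ℝ) = -(t - c) := by ring
        have hsq : ((-1:ℝ)^k) * ((-1:ℝ)^k) = 1 := by
          rw [← pow_add]; exact Even.neg_one_pow ⟨k, rfl⟩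
        rw [h3, neg_pow]
        linear_combination ((k.factorial:ℝ))⁻¹ * (t-c)^k * hsq
      rw [Real.norm_eq_abs, htay, hgt] at h
      refine le_trans h ?_
      have : |t - c| = 2*c - t - c := by rw [abs_of_neg (by linarith : t - c < 0)]; ring
      rw [this]
    · intro y hy
      rw [Real.norm_eq_abs, iDW_eq_iD hs' hgcd hct' hIccsub le_rfl hy, hgk]
      rw [smul_eq_mul, abs_mul, abs_pow, abs_neg, abs_one, one_pow, one_mul]
      apply hbound
      rw [Set.uIcc_of_ge hct.le]
      simp only [Set.mem_Icc] at hy ⊢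
      constructor <;> linarith [hy.1, hy.2]

/-- **Taylor remainder estimate for the tangent kernel.** For every `m`, there is `C > 0` such
that for `t` in the interval `I` of center `x_I` and radius `r < π/4` and `x` outside `Ĩ` (radius
`2r`, distances on the torus), the degree-`m` Taylor polynomial `P_m` at `x_I` of
`t ↦ 1/tan((x-t)/2)` satisfies
`|1/tan((x-t)/2) - P_m(t)| ≤ C |t-x_I|^{m+1}/|x-x_I|^{m+2} ≤ C |I|^{m+1}/|x-x_I|^{m+2}`. -/
theorem tan_kernel_taylor_remainder (m : ℕ) :
    ∃ C > 0, ∀ x_I r x t : ℝ, 0 < r → r < π / 4 →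
      |t - x_I| ≤ r → 2 * r ≤ |x - x_I| → |x - x_I| ≤ π →
      |1 / Real.tan ((x - t) / 2) -
          taylorWithinEval (fun u => 1 / Real.tan ((x - u) / 2)) m Set.univ x_I t| ≤
        C * |t - x_I| ^ (m + 1) / |x - x_I| ^ (m + 2) ∧
      C * |t - x_I| ^ (m + 1) / |x - x_I| ^ (m + 2) ≤
        C * (2 * r) ^ (m + 1) / |x - x_I| ^ (m + 2) := by
  obtain ⟨A1, hA1pos, hA1⟩ := poly_eval_le (cotPoly (m+1)) (m+2) (cotPoly_natDegree_le (m+1))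
  have hsb : 0 < Real.sin (5*π/8) := by
    apply Real.sin_pos_of_pos_of_lt_pi (by positivity); nlinarith [pi_pos]
  set K : ℝ := (5*π/8) / Real.sin (5*π/8) with hKdef
  have hKpos : 0 < K := div_pos (by positivity) hsb
  refine ⟨(1/2:ℝ)^(m+1) * A1 * (4*K)^(m+2) / m.factorial, by positivity, ?_⟩
  set C : ℝ := (1/2:ℝ)^(m+1) * A1 * (4*K)^(m+2) / m.factorial with hCdef
  have hCpos : 0 < C := by positivity
  intro x_I r x t hr hrπ htr hxr hxπ
  set D : ℝ := |x - x_I| with hDdef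
  have hD : 0 < D := lt_of_lt_of_le (by linarith) hxr
  have hfeq : (fun u => 1 / Real.tan ((x - u) / 2))
      = fun u => Real.cos ((x-u)/2) / Real.sin ((x-u)/2) := by
    funext u
    rw [Real.tan_eq_sin_div_cos, one_div_div]
  -- facts about points in the segment
  have hseg : ∀ u ∈ Set.uIcc x_I t, D/2 ≤ |x - u| ∧ |x - u| ≤ 5*π/4 := by
    intro u hu
    have hur : |u - x_I| ≤ r := by
      rw [Set.mem_uIcc] at hu
      have h1 := abs_le.mp htr
      rw [abs_le]
      rcases hu with ⟨h2, h3⟩ | ⟨h2, h3⟩ <;> constructor <;> linarith [h1.1, h1.2]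
    have h1 : |x - x_I| - |x - u| ≤ |u - x_I| := by
      have h := abs_sub_abs_le_abs_sub (x - x_I) (x - u)
      rwa [show (x - x_I) - (x - u) = u - x_I from by ring] at h
    have h2 : |x - u| ≤ |x - x_I| + |u - x_I| := by
      have h := abs_add_le (x - x_I) (x_I - u)
      rw [show (x - x_I) + (x_I - u) = x - u from by ring] at h
      rwa [show |x_I - u| = |u - x_I| from abs_sub_comm _ _] at h
    constructor
    · have : 2*r ≤ D := hxr
      linarith
    · linarith
  have hsin : ∀ u ∈ Set.uIcc x_I t, Real.sin ((x - u)/2) ≠ 0 := by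
    intro u hu
    obtain ⟨hlo, hhi⟩ := hseg u hu
    have hne : (x - u)/2 ≠ 0 := by
      intro h
      have : x - u = 0 := by linarith [(div_eq_zero_iff.mp h).resolve_right (by norm_num)]
      rw [this, abs_zero] at hlo
      linarith
    have hb1 : -π < (x - u)/2 := by
      have := neg_abs_le (x - u)
      have hπ : (0:ℝ) < π := pi_pos
      have : -(5*π/4) ≤ x - u := by linarith [neg_abs_le (x - u)]
      linarith
    have hb2 : (x - u)/2 < π := by
      have := le_abs_self (x - u)
      linarith [pi_pos]
    intro h
    exact hne ((Real.sin_eq_zero_iff_of_lt_of_lt hb1 hb2).mp h)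
  set S : Set ℝ := {u : ℝ | Real.sin ((x - u)/2) ≠ 0} with hSdef
  have hSopen : IsOpen S := by
    have hc : Continuous fun u : ℝ => Real.sin ((x - u)/2) :=
      Real.continuous_sin.comp ((continuous_const.sub continuous_id).div_const 2)
    exact isOpen_compl_singleton.preimage hc
  have hsub : Set.uIcc x_I t ⊆ S := fun u hu => hsin u hu
  have hcd : ContDiffOn ℝ (m+1 : ℕ) (fun u => Real.cos ((x-u)/2) / Real.sin ((x-u)/2)) S := by
    have hinner : ContDiff ℝ (m+1 : ℕ) (fun u : ℝ => (x - u)/2) :=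
      (contDiff_const.sub contDiff_id).div_const 2
    exact ((Real.contDiff_cos.of_le le_top).comp hinner).contDiffOn.div
      (((Real.contDiff_sin.of_le le_top).comp hinner).contDiffOn) (fun u hu => hu)
  -- derivative bound
  set M : ℝ := (1/2:ℝ)^(m+1) * A1 * ((4*K)^(m+2) / D^(m+2)) with hMdef
  have hbound : ∀ u ∈ Set.uIcc x_I t,
      |iteratedDeriv (m+1) (fun u => Real.cos ((x-u)/2) / Real.sin ((x-u)/2)) u| ≤ M := by
    intro u hu
    obtain ⟨hlo, hhi⟩ := hseg u hu
    have hxu : (0:ℝ) < |x - u| := lt_of_lt_of_le (by linarith) hlo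
    have hw0 : (x - u)/2 ≠ 0 := by
      intro h
      have : x - u = 0 := by linarith [(div_eq_zero_iff.mp h).resolve_right (by norm_num)]
      rw [this, abs_zero] at hxu; linarith
    have hwabs : |(x - u)/2| ≤ 5*π/8 := by
      rw [abs_div, abs_of_pos (by norm_num : (0:ℝ) < 2)]
      linarith
    have hwpos : 0 < |(x - u)/2| := abs_pos.mpr hw0
    rw [iteratedDeriv_cotker x (m+1) u (hsin u hu)]
    rw [abs_mul, abs_pow, abs_div, abs_of_pos one_pos, abs_of_pos (by norm_num : (0:ℝ) < 2)]
    have hB1 : 1 ≤ K / |(x - u)/2| := cot_kernel_bounds hw0 hwabs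
    have hB2 : |Real.cot ((x - u)/2)| ≤ K / |(x - u)/2| := abs_cot_le hw0 hwabs
    have hev := hA1 (K / |(x - u)/2|) (Real.cot ((x - u)/2)) hB1 hB2
    have hBle : K / |(x - u)/2| ≤ 4*K/D := by
      rw [abs_div, abs_of_pos (by norm_num : (0:ℝ) < 2), div_div_eq_mul_div]
      rw [div_le_div_iff₀ (by positivity) hD]
      calc K * 2 * D ≤ K * 2 * (2 * |x - u|) := by nlinarith
        _ = 4 * K * |x - u| := by ring
    have hpow : (K / |(x - u)/2|)^(m+2) ≤ (4*K/D)^(m+2) := by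
      apply pow_le_pow_left₀ (by positivity) hBle
    calc (1/2:ℝ)^(m+1) * |Polynomial.eval (Real.cot ((x - u)/2)) (cotPoly (m+1))|
        ≤ (1/2:ℝ)^(m+1) * (A1 * (K / |(x - u)/2|)^(m+2)) := by
          apply mul_le_mul_of_nonneg_left hev (by positivity)
      _ ≤ (1/2:ℝ)^(m+1) * (A1 * (4*K/D)^(m+2)) := by
          apply mul_le_mul_of_nonneg_left _ (by positivity)
          exact mul_le_mul_of_nonneg_left hpow (le_of_lt hA1pos)
      _ = M := by rw [hMdef, div_pow]; ring
  have htaylor := taylor_two_sided hSopen hcd hsub hbound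
  constructor
  · have hft : 1 / Real.tan ((x - t)/2) = Real.cos ((x-t)/2) / Real.sin ((x-t)/2) := by
      rw [Real.tan_eq_sin_div_cos, one_div_div]
    rw [hfeq, hft]
    refine le_trans htaylor (le_of_eq ?_)
    rw [hMdef, hCdef]
    have hfacne : (m.factorial:ℝ) ≠ 0 := by positivity
    have hDne : (D:ℝ)^(m+2) ≠ 0 := by positivity
    field_simp
  · have h2r : |t - x_I| ≤ 2*r := by linarith
    gcongr
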